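/- Let A, A' be full-rank k'×n' matrices and B, B' full-rank (k-k')×(n-n') matrices over F_q, all in reduced row echelon form, and let F, F' be k'×(n-n'-k+k') matrices. If A = A' and B = B', then the subspace distance between the row spaces of the block matrices [[A, φ_B(F)],[0, B]] and [[A, φ_B(F')],[0, B]] equals 2·d_R(F, F'). -/

import Mathlib

open Module

/-- A full-rank `k × n` matrix is in reduced row echelon form with pivot columns
given by the strictly increasing list `c` if the pivot columns form an identity
submatrix and all entries to the left of each pivot are zero. -/
def IsRRE {F : Type*} [Field F] {k n : ℕ} (A : Matrix (Fin k) (Fin n) F)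
    (c : Fin k → Fin n) : Prop :=
  StrictMono c ∧ (∀ i j, A i (c j) = if j = i then 1 else 0) ∧
    (∀ (i : Fin k) (j : Fin n), (j : ℕ) < (c i : ℕ) → A i j = 0)

/-- The row space of a matrix: the span of its rows. -/
def rowSpace {F : Type*} [Field F] {k n : ℕ} (A : Matrix (Fin k) (Fin n) F) :
    Submodule F (Fin n → F) :=
  Submodule.span F (Set.range fun i => A i)

open scoped Classical in
/-- `insertZeroCols c M` is `φ_B(M)`: the matrix obtained from `M` by inserting zero
columns at the pivot positions (given by `c`) of a full-rank RRE matrix `B` with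
`kb` rows and `nb` columns. -/
noncomputable def insertZeroCols {F : Type*} [Field F] {k' kb nb : ℕ}
    (c : Fin kb → Fin nb) (M : Matrix (Fin k') (Fin (nb - kb)) F) :
    Matrix (Fin k') (Fin nb) F :=
  Matrix.of fun i j =>
    if ∃ t, c t = j then 0
    else if h : (j : ℕ) - (Finset.univ.filter fun t : Fin kb => (c t : ℕ) ≤ (j : ℕ)).card
        < nb - kb then
      M i ⟨_, h⟩
    else 0

/-- The subspace distance `d_S(U,W) = dim U + dim W - 2 dim (U ⊓ W)`. -/
noncomputable def subspaceDist {F : Type*} [Field F] {V : Type*} [AddCommGroup V]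
    [Module F V] (U W : Submodule F V) : ℕ :=
  finrank F U + finrank F W - 2 * finrank F ↥(U ⊓ W)

/-- Row space of a matrix whose columns are indexed by a sum type. -/
def rowSpace' {F : Type*} [Field F] {ρ ι : Type*} (A : Matrix ρ ι F) :
    Submodule F (ι → F) :=
  Submodule.span F (Set.range fun i => A i)


/-- Combinatorial core: every index of `Fin (nb - kb)` is realized by a non-pivot column. -/
lemma exists_nonpivot {kb nb : ℕ} (c : Fin kb → Fin nb) (hc : Function.Injective c)
    (s : Fin (nb - kb)) :
    ∃ j : Fin nb, (¬ ∃ t, c t = j) ∧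
      ∃ h : (j : ℕ) - (Finset.univ.filter fun t : Fin kb => (c t : ℕ) ≤ (j : ℕ)).card < nb - kb,
        (⟨_, h⟩ : Fin (nb - kb)) = s := by
  classical
  set P : Finset (Fin nb) := Finset.univ.image c with hP
  have hPcard : P.card = kb := by
    rw [hP, Finset.card_image_of_injective _ hc, Finset.card_univ, Fintype.card_fin]
  have hNcard : Pᶜ.card = nb - kb := by
    rw [Finset.card_compl, hPcard, Fintype.card_fin]
  have key : ∀ j : Fin nb, j ∈ Pᶜ →
      (j : ℕ) - (Finset.univ.filter fun t : Fin kb => (c t : ℕ) ≤ (j : ℕ)).card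
        = (Pᶜ.filter fun m : Fin nb => m < j).card := by
    intro j hj
    have hjP : j ∉ P := Finset.mem_compl.mp hj
    have h1 : (Finset.univ.filter fun t : Fin kb => (c t : ℕ) ≤ (j : ℕ)).card
        = (P.filter fun m : Fin nb => m < j).card := by
      have himg : (Finset.univ.filter fun t : Fin kb => c t ≤ j).image c
          = P.filter fun m : Fin nb => m ≤ j := by
        rw [hP, Finset.filter_image]
      have heq : (P.filter fun m : Fin nb => m ≤ j) = P.filter fun m : Fin nb => m < j := by
        apply Finset.filter_congr
        intro m hm
        constructor
        · intro h
          rcases lt_or_eq_of_le h with h' | h'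
          · exact h'
          · exact absurd (h' ▸ hm) hjP
        · exact le_of_lt
      have hle : (Finset.univ.filter fun t : Fin kb => (c t : ℕ) ≤ (j : ℕ))
          = Finset.univ.filter fun t : Fin kb => c t ≤ j := by
        apply Finset.filter_congr; intro t _; exact Fin.le_def.symm
      rw [hle, ← heq, ← himg, Finset.card_image_of_injective _ hc]
    have h2 : (P.filter fun m : Fin nb => m < j).card
        + (Pᶜ.filter fun m : Fin nb => m < j).card
        = (Finset.univ.filter fun m : Fin nb => m < j).card := by
      rw [← Finset.card_union_of_disjoint
        (Finset.disjoint_filter_filter disjoint_compl_right),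
        ← Finset.filter_union, Finset.union_compl]
    have h3 : (Finset.univ.filter fun m : Fin nb => m < j).card = (j : ℕ) := by
      have he : (Finset.univ.filter fun m : Fin nb => m < j) = Finset.Iio j := by
        ext m; simp only [Finset.mem_filter, Finset.mem_univ, true_and, Finset.mem_Iio]
      rw [he, Fin.card_Iio]
    omega
  have bound : ∀ j : Fin nb, j ∈ Pᶜ →
      (Pᶜ.filter fun m : Fin nb => m < j).card < nb - kb := by
    intro j hj
    have hsub : (Pᶜ.filter fun m : Fin nb => m < j) ⊆ Pᶜ.erase j := by
      intro m hm
      rw [Finset.mem_filter] at hm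
      exact Finset.mem_erase.mpr ⟨ne_of_lt hm.2, hm.1⟩
    have h0 : 0 < Pᶜ.card := Finset.card_pos.mpr ⟨j, hj⟩
    have := Finset.card_le_card hsub
    rw [Finset.card_erase_of_mem hj, hNcard] at this
    omega
  have inj : ∀ j₁ j₂ : Fin nb, j₁ ∈ Pᶜ → j₂ ∈ Pᶜ →
      (Pᶜ.filter fun m : Fin nb => m < j₁).card
        = (Pᶜ.filter fun m : Fin nb => m < j₂).card → j₁ = j₂ := by
    have mono : ∀ j₁ j₂ : Fin nb, j₁ ∈ Pᶜ → j₁ < j₂ →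
        (Pᶜ.filter fun m : Fin nb => m < j₁).card
          < (Pᶜ.filter fun m : Fin nb => m < j₂).card := by
      intro j₁ j₂ hj₁ hlt
      apply Finset.card_lt_card
      constructor
      · intro m hm
        rw [Finset.mem_filter] at hm ⊢
        exact ⟨hm.1, lt_trans hm.2 hlt⟩
      · intro hsub
        have hmem : j₁ ∈ Pᶜ.filter fun m : Fin nb => m < j₂ :=
          Finset.mem_filter.mpr ⟨hj₁, hlt⟩
        have := hsub hmem
        rw [Finset.mem_filter] at this
        exact absurd this.2 (lt_irrefl j₁)
    intro j₁ j₂ h₁ h₂ heq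
    rcases lt_trichotomy j₁ j₂ with h | h | h
    · exact absurd heq (Nat.ne_of_lt (mono _ _ h₁ h))
    · exact h
    · exact absurd heq.symm (Nat.ne_of_lt (mono _ _ h₂ h))
  have hcard : (Finset.univ : Finset (Fin (nb - kb))).card ≤ Pᶜ.card := by
    rw [Finset.card_univ, Fintype.card_fin, hNcard]
  obtain ⟨j, hj, hjs⟩ := Finset.surj_on_of_inj_on_of_card_le
    (fun j (hj : j ∈ Pᶜ) => (⟨_, bound j hj⟩ : Fin (nb - kb)))
    (fun _ _ => Finset.mem_univ _)
    (fun j₁ j₂ h₁ h₂ h => inj j₁ j₂ h₁ h₂ (congrArg Fin.val h))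
    hcard s (Finset.mem_univ s)
  refine ⟨j, ?_, ?_⟩
  · rintro ⟨t, ht⟩
    exact Finset.mem_compl.mp hj (Finset.mem_image.mpr ⟨t, Finset.mem_univ t, ht⟩)
  · refine ⟨by rw [key j hj]; exact bound j hj, ?_⟩
    rw [hjs]
    exact Fin.ext (key j hj)

section aux
variable {F : Type*} [Field F] {k' kb nb : ℕ}

lemma insertZeroCols_pivot (c : Fin kb → Fin nb) (M : Matrix (Fin k') (Fin (nb - kb)) F)
    (i : Fin k') (t : Fin kb) : insertZeroCols c M i (c t) = 0 := by
  rw [insertZeroCols]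
  simp only [Matrix.of_apply]
  rw [if_pos ⟨t, rfl⟩]

lemma insertZeroCols_sub (c : Fin kb → Fin nb) (M M' : Matrix (Fin k') (Fin (nb - kb)) F) :
    insertZeroCols c M - insertZeroCols c M' = insertZeroCols c (M - M') := by
  ext i j
  simp only [Matrix.sub_apply, insertZeroCols, Matrix.of_apply]
  split_ifs <;> simp

lemma finrank_span_rows {m np : ℕ} (X : Matrix (Fin m) (Fin np) F) :
    finrank F (Submodule.span F (Set.range fun i => X i)) = X.rank := by
  rw [← Matrix.rank_transpose X, Matrix.rank_eq_finrank_span_cols]; rfl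

lemma rank_insertZeroCols (c : Fin kb → Fin nb) (hc : Function.Injective c)
    (M : Matrix (Fin k') (Fin (nb - kb)) F) : (insertZeroCols c M).rank = M.rank := by
  classical
  have hspan : Submodule.span F (Set.range (insertZeroCols c M).transpose)
      = Submodule.span F (Set.range M.transpose) := by
    apply le_antisymm
    · rw [Submodule.span_le]
      rintro _ ⟨j, rfl⟩
      by_cases hp : ∃ t, c t = j
      · have h0 : (insertZeroCols c M).transpose j = 0 := by
          funext i
          simp [Matrix.transpose_apply, insertZeroCols, hp]
        rw [h0]; exact Submodule.zero_mem _
      · by_cases h : (j : ℕ) - (Finset.univ.filter fun t : Fin kb =>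
            (c t : ℕ) ≤ (j : ℕ)).card < nb - kb
        · have h1 : (insertZeroCols c M).transpose j = M.transpose ⟨_, h⟩ := by
            funext i
            simp only [Matrix.transpose_apply, insertZeroCols, Matrix.of_apply]
            rw [if_neg hp, dif_pos h]
          rw [h1]
          exact Submodule.subset_span ⟨_, rfl⟩
        · have h0 : (insertZeroCols c M).transpose j = 0 := by
            funext i
            simp only [Matrix.transpose_apply, insertZeroCols, Matrix.of_apply, Pi.zero_apply]
            rw [if_neg hp, dif_neg h]
          rw [h0]; exact Submodule.zero_mem _
    · rw [Submodule.span_le]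
      rintro _ ⟨s, rfl⟩
      obtain ⟨j, hnp, h, hs⟩ := exists_nonpivot c hc s
      have h1 : M.transpose s = (insertZeroCols c M).transpose j := by
        funext i
        simp only [Matrix.transpose_apply, insertZeroCols, Matrix.of_apply]
        rw [if_neg hnp, dif_pos h, ← hs]
      rw [h1]
      exact Submodule.subset_span ⟨j, rfl⟩
  rw [Matrix.rank_eq_finrank_span_cols, Matrix.rank_eq_finrank_span_cols]
  unfold Matrix.col
  rw [hspan]

lemma combo_eval {na : ℕ} (A : Matrix (Fin k') (Fin na) F) (ca : Fin k' → Fin na)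
    (hA : ∀ i j, A i (ca j) = if j = i then 1 else 0)
    (B : Matrix (Fin kb) (Fin nb) F) (cb : Fin kb → Fin nb)
    (hB : ∀ i j, B i (cb j) = if j = i then 1 else 0)
    (N : Matrix (Fin k') (Fin nb) F) (hN : ∀ i t, N i (cb t) = 0)
    (g : Fin k' ⊕ Fin kb → F) :
    (∀ j, (∑ i, g i • Matrix.fromBlocks A N 0 B i) (Sum.inl (ca j)) = g (Sum.inl j)) ∧
    (∀ t, (∑ i, g i • Matrix.fromBlocks A N 0 B i) (Sum.inr (cb t)) = g (Sum.inr t)) := by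
  constructor
  · intro j
    simp only [Finset.sum_apply, Pi.smul_apply, smul_eq_mul, Fintype.sum_sum_type,
      Matrix.fromBlocks_apply₁₁, Matrix.fromBlocks_apply₂₁, Matrix.zero_apply, mul_zero,
      Finset.sum_const_zero, add_zero, hA]
    simp [mul_ite, Finset.sum_ite_eq]
  · intro t
    simp only [Finset.sum_apply, Pi.smul_apply, smul_eq_mul, Fintype.sum_sum_type,
      Matrix.fromBlocks_apply₁₂, Matrix.fromBlocks_apply₂₂, hN, hB, mul_zero,
      Finset.sum_const_zero, zero_add]
    simp [mul_ite, Finset.sum_ite_eq]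

lemma rows_indep {na : ℕ} (A : Matrix (Fin k') (Fin na) F) (ca : Fin k' → Fin na)
    (hA : ∀ i j, A i (ca j) = if j = i then 1 else 0)
    (B : Matrix (Fin kb) (Fin nb) F) (cb : Fin kb → Fin nb)
    (hB : ∀ i j, B i (cb j) = if j = i then 1 else 0)
    (N : Matrix (Fin k') (Fin nb) F) (hN : ∀ i t, N i (cb t) = 0) :
    LinearIndependent F (Matrix.fromBlocks A N 0 B) := by
  apply Fintype.linearIndependent_iff.mpr
  intro g hg i
  obtain ⟨h1, h2⟩ := combo_eval A ca hA B cb hB N hN g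
  cases i with
  | inl j => rw [← h1 j, hg]; simp
  | inr t => rw [← h2 t, hg]; simp

end aux

/-- If `A = A'` and `B = B'` in the coset construction, the subspace distance of
the row spaces of `[[A, φ_B(F)],[0, B]]` and `[[A, φ_B(F')],[0, B]]` equals
`2 · d_R(F, F')`. -/
theorem coset_dist_same_AB {F : Type*} [Field F] [Fintype F] {n k n' k' : ℕ}
    (hk : 1 ≤ k) (hkn : 2 * k ≤ n) (hk' : 1 ≤ k') (hk'n' : k' ≤ n')
    (hkk' : 1 ≤ k - k') (hkn' : k - k' ≤ n - n')
    (A : Matrix (Fin k') (Fin n') F) (ca : Fin k' → Fin n') (hA : IsRRE A ca)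
    (B : Matrix (Fin (k - k')) (Fin (n - n')) F) (cb : Fin (k - k') → Fin (n - n'))
    (hB : IsRRE B cb)
    (M M' : Matrix (Fin k') (Fin ((n - n') - (k - k'))) F) :
    subspaceDist
        (rowSpace' (Matrix.fromBlocks A (insertZeroCols cb M) 0 B))
        (rowSpace' (Matrix.fromBlocks A (insertZeroCols cb M') 0 B)) =
      2 * (M - M').rank := by
  classical
  obtain ⟨hca, hA2, -⟩ := hA
  obtain ⟨hcb, hB2, -⟩ := hB
  set Δ : Matrix (Fin k') (Fin ((n - n') - (k - k'))) F := M - M' with hΔ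
  set φM := insertZeroCols cb M with hφM
  set φM' := insertZeroCols cb M' with hφM'
  set φΔ := insertZeroCols cb Δ with hφΔ
  set U := rowSpace' (Matrix.fromBlocks A φM 0 B) with hUdef
  set W := rowSpace' (Matrix.fromBlocks A φM' 0 B) with hWdef
  set d : Fin k' → ((Fin n' ⊕ Fin (n - n')) → F) := fun i => Sum.elim 0 (φΔ i) with hd
  set S := Submodule.span F (Set.range d) with hSdef
  have hUdim : finrank F U = k' + (k - k') := by
    rw [hUdef, rowSpace',
      finrank_span_eq_card (rows_indep A ca hA2 B cb hB2 φM
        (fun i t => insertZeroCols_pivot cb M i t))]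
    simp
  have hWdim : finrank F W = k' + (k - k') := by
    rw [hWdef, rowSpace',
      finrank_span_eq_card (rows_indep A ca hA2 B cb hB2 φM'
        (fun i t => insertZeroCols_pivot cb M' i t))]
    simp
  have hSdim : finrank F S = Δ.rank := by
    let e : (Fin (n - n') → F) →ₗ[F] ((Fin n' ⊕ Fin (n - n')) → F) :=
      { toFun := fun x => Sum.elim 0 x
        map_add' := fun x y => by funext j; cases j <;> simp
        map_smul' := fun c x => by funext j; cases j <;> simp }
    have he : Function.Injective e := fun x y h => funext fun j => congrFun h (Sum.inr j)
    have hSmap : S = Submodule.map e (Submodule.span F (Set.range fun i => φΔ i)) := by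
      rw [Submodule.map_span, ← Set.range_comp]
      rfl
    rw [hSmap, ← (Submodule.equivMapOfInjective e he
      (Submodule.span F (Set.range fun i => φΔ i))).finrank_eq,
      finrank_span_rows, hφΔ, rank_insertZeroCols cb hcb.injective]
  have hrow : ∀ i : Fin k',
      Matrix.fromBlocks A φM 0 B (Sum.inl i) - Matrix.fromBlocks A φM' 0 B (Sum.inl i)
        = d i := by
    intro i
    funext j
    simp only [Pi.sub_apply]
    cases j with
    | inl j => simp [hd]
    | inr j =>
        simp only [Matrix.fromBlocks_apply₁₂, hd, Sum.elim_inr, hφΔ, hΔ, hφM, hφM',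
          ← insertZeroCols_sub cb M M', Matrix.sub_apply]
  have hUW : U ⊔ W = U ⊔ S := by
    apply le_antisymm
    · apply sup_le le_sup_left
      rw [hWdef, rowSpace', Submodule.span_le]
      rintro _ ⟨i, rfl⟩
      cases i with
      | inl i =>
          have hm : Matrix.fromBlocks A φM 0 B (Sum.inl i) - d i ∈ U ⊔ S :=
            sub_mem
              (Submodule.mem_sup_left (Submodule.subset_span ⟨Sum.inl i, rfl⟩))
              (Submodule.mem_sup_right (Submodule.subset_span ⟨i, rfl⟩))
          have h2 : Matrix.fromBlocks A φM' 0 B (Sum.inl i)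
              = Matrix.fromBlocks A φM 0 B (Sum.inl i) - d i := by
            rw [← hrow i]; ring
          show Matrix.fromBlocks A φM' 0 B (Sum.inl i) ∈ U ⊔ S
          exact h2 ▸ hm
      | inr s =>
          have hm : Matrix.fromBlocks A φM 0 B (Sum.inr s) ∈ U ⊔ S :=
            Submodule.mem_sup_left (Submodule.subset_span ⟨Sum.inr s, rfl⟩)
          have h2 : Matrix.fromBlocks A φM' 0 B (Sum.inr s)
              = Matrix.fromBlocks A φM 0 B (Sum.inr s) := by
            funext j; cases j <;> simp
          show Matrix.fromBlocks A φM' 0 B (Sum.inr s) ∈ U ⊔ S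
          exact h2 ▸ hm
    · apply sup_le le_sup_left
      rw [hSdef, Submodule.span_le]
      rintro _ ⟨i, rfl⟩
      have hm : Matrix.fromBlocks A φM 0 B (Sum.inl i)
          - Matrix.fromBlocks A φM' 0 B (Sum.inl i) ∈ U ⊔ W :=
        sub_mem
          (Submodule.mem_sup_left (Submodule.subset_span ⟨Sum.inl i, rfl⟩))
          (Submodule.mem_sup_right (Submodule.subset_span ⟨Sum.inl i, rfl⟩))
      show d i ∈ U ⊔ W
      exact (hrow i) ▸ hm
  have hS1 : ∀ x ∈ S, ∀ j : Fin n', x (Sum.inl j) = 0 := by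
    intro x hx j
    have hle : S ≤ LinearMap.ker (LinearMap.proj (Sum.inl j) :
        ((Fin n' ⊕ Fin (n - n')) → F) →ₗ[F] F) := by
      rw [hSdef, Submodule.span_le]
      rintro _ ⟨i, rfl⟩
      simp [LinearMap.mem_ker, hd]
    exact hle hx
  have hS2 : ∀ x ∈ S, ∀ t : Fin (k - k'), x (Sum.inr (cb t)) = 0 := by
    intro x hx t
    have hle : S ≤ LinearMap.ker (LinearMap.proj (Sum.inr (cb t)) :
        ((Fin n' ⊕ Fin (n - n')) → F) →ₗ[F] F) := by
      rw [hSdef, Submodule.span_le]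
      rintro _ ⟨i, rfl⟩
      simp [LinearMap.mem_ker, hd, hφΔ, insertZeroCols_pivot]
    exact hle hx
  have hUS : U ⊓ S = ⊥ := by
    rw [eq_bot_iff]
    intro v hv
    rw [Submodule.mem_inf] at hv
    obtain ⟨hvU, hvS⟩ := hv
    rw [hUdef, rowSpace', Submodule.mem_span_range_iff_exists_fun] at hvU
    obtain ⟨g, hg⟩ := hvU
    obtain ⟨h1, h2⟩ := combo_eval A ca hA2 B cb hB2 φM
      (fun i t => insertZeroCols_pivot cb M i t) g
    have hgz : ∀ i, g i = 0 := by
      intro i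
      cases i with
      | inl j => rw [← h1 j, hg]; exact hS1 v hvS (ca j)
      | inr t => rw [← h2 t, hg]; exact hS2 v hvS t
    rw [Submodule.mem_bot, ← hg]
    simp [hgz]
  have key1 := Submodule.finrank_sup_add_finrank_inf_eq U S
  have key2 := Submodule.finrank_sup_add_finrank_inf_eq U W
  rw [hUS, finrank_bot] at key1
  rw [hUW] at key2
  have hr : Δ.rank ≤ k' := by
    have := Matrix.rank_le_card_height Δ
    simpa using this
  rw [subspaceDist]
  omega
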